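/- The cyclic incidence structure with point set Z_n and lines {i, i+1, i+3} (mod n) for i ∈ Z_n is a symmetric n₃ configuration (i.e., it is linear with each point on exactly 3 lines and each line containing exactly 3 points) if and only if n ≥ 7. -/

import Mathlib

open SimpleGraph

/-- A 2-factor of `G`: a spanning subgraph in which every vertex has degree exactly 2. -/
def SimpleGraph.IsTwoFactor {V : Type*} (G F : SimpleGraph V) : Prop :=
  F ≤ G ∧ ∀ v : V, (F.neighborSet v).ncard = 2

/-- The number of cycles of a 2-factor, i.e. its number of connected components. -/
noncomputable def SimpleGraph.numCycles {V : Type*} (F : SimpleGraph V) : ℕ :=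
  Nat.card F.ConnectedComponent

/-- A graph is pseudo 2-factor isomorphic if all its 2-factors have the same
parity of number of cycles. -/
def SimpleGraph.PseudoTwoFactorIsomorphic {V : Type*} (G : SimpleGraph V) : Prop :=
  ∀ F₁ F₂ : SimpleGraph V, G.IsTwoFactor F₁ → G.IsTwoFactor F₂ →
    F₁.numCycles % 2 = F₂.numCycles % 2

/-- Line `i` of the cyclic incidence structure with base line `{0,1,3}`. -/
def cyclicLine (n : ℕ) (i : ZMod n) : Set (ZMod n) := {i, i + 1, i + 3}

/-- The cyclic incidence structure with point set `ZMod n` and lines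
`{i, i+1, i+3}`, `i ∈ ZMod n`, is a symmetric `n₃` configuration — i.e. it is a
finite structure with `n` distinct lines which is linear (two distinct points lie on
at most one common line), each point lying on exactly 3 lines and each line
containing exactly 3 points — if and only if `n ≥ 7`. -/
lemma zmod_diff_eq {n : ℕ} (hn : 7 ≤ n) {a b : ℤ} (h : (a : ZMod n) = b)
    (hb : (a - b).natAbs ≤ 6) : a = b := by
  have h2 : ((a - b : ℤ) : ZMod n) = 0 := by push_cast; rw [h]; ring
  have h3 : (n : ℤ) ∣ (a - b) := (ZMod.intCast_zmod_eq_zero_iff_dvd _ _).mp h2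
  have h4 : n ∣ (a - b).natAbs := by
    have := Int.natAbs_dvd_natAbs.mpr h3
    simpa using this
  have h5 : (a - b).natAbs = 0 := Nat.eq_zero_of_dvd_of_lt h4 (by omega)
  omega

lemma zmod_small_ne {n : ℕ} (hn : 7 ≤ n) {a b : ℤ} (hne : a ≠ b)
    (hb : (a - b).natAbs ≤ 6) : (a : ZMod n) ≠ (b : ZMod n) :=
  fun h => hne (zmod_diff_eq hn h hb)

lemma mem_cyclicLine_iff {n : ℕ} {p i : ZMod n} :
    p ∈ cyclicLine n i ↔ p = i ∨ p = i + 1 ∨ p = i + 3 := by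
  simp [cyclicLine]

lemma mem_cyclicLine_int {n : ℕ} {p i : ZMod n} (h : p ∈ cyclicLine n i) :
    ∃ a : ℤ, (a = 0 ∨ a = 1 ∨ a = 3) ∧ p = i + (a : ZMod n) := by
  rcases mem_cyclicLine_iff.mp h with h | h | h
  · exact ⟨0, Or.inl rfl, by push_cast; simpa using h⟩
  · exact ⟨1, Or.inr (Or.inl rfl), by push_cast; exact h⟩
  · exact ⟨3, Or.inr (Or.inr rfl), by push_cast; exact h⟩

theorem cyclic_configuration_iff_seven_le (n : ℕ) :
    (Finite (ZMod n) ∧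
     Function.Injective (cyclicLine n) ∧
     (∀ p q : ZMod n, p ≠ q →
        {i : ZMod n | p ∈ cyclicLine n i ∧ q ∈ cyclicLine n i}.ncard ≤ 1) ∧
     (∀ p : ZMod n, {i : ZMod n | p ∈ cyclicLine n i}.ncard = 3) ∧
     (∀ i : ZMod n, (cyclicLine n i).ncard = 3)) ↔ 7 ≤ n := by
  constructor
  · rintro ⟨hfin, hinj, hlin, hpt, hline⟩
    by_contra hlt
    push_neg at hlt
    interval_cases n
    · exact absurd hfin (by simpa using (inferInstanceAs (Infinite ℤ) : Infinite (ZMod 0)).not_finite)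
    · -- n = 1
      have h := hline 0
      have h2 : (cyclicLine 1 0).ncard ≤ 1 := by
        refine le_trans (Set.ncard_le_ncard (Set.subset_univ _) Set.finite_univ) ?_
        rw [Set.ncard_univ]
        simp
      omega
    · -- n = 2
      have h := hline 0
      have he : cyclicLine 2 0 = {0, 1} := by
        ext x
        simp only [cyclicLine, Set.mem_insert_iff, Set.mem_singleton_iff]
        revert x; decide
      rw [he, Set.ncard_pair (by decide : (0 : ZMod 2) ≠ 1)] at h
      omega
    · -- n = 3
      have h := hline 0
      have he : cyclicLine 3 0 = {0, 1} := by
        ext x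
        simp only [cyclicLine, Set.mem_insert_iff, Set.mem_singleton_iff]
        revert x; decide
      rw [he, Set.ncard_pair (by decide : (0 : ZMod 3) ≠ 1)] at h
      omega
    · -- n = 4
      have h := hlin 0 1 (by decide)
      have hsub : ({0, 1} : Set (ZMod 4)) ⊆
          {i : ZMod 4 | (0 : ZMod 4) ∈ cyclicLine 4 i ∧ (1 : ZMod 4) ∈ cyclicLine 4 i} := by
        rintro x (rfl | rfl) <;>
          simp only [Set.mem_setOf_eq, cyclicLine, Set.mem_insert_iff,
            Set.mem_singleton_iff] <;> constructor <;> decide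
      have h2 := Set.ncard_le_ncard hsub (Set.toFinite _)
      rw [Set.ncard_pair (by decide : (0 : ZMod 4) ≠ 1)] at h2
      omega
    · -- n = 5
      have h := hlin 0 2 (by decide)
      have hsub : ({2, 4} : Set (ZMod 5)) ⊆
          {i : ZMod 5 | (0 : ZMod 5) ∈ cyclicLine 5 i ∧ (2 : ZMod 5) ∈ cyclicLine 5 i} := by
        rintro x (rfl | rfl) <;>
          simp only [Set.mem_setOf_eq, cyclicLine, Set.mem_insert_iff,
            Set.mem_singleton_iff] <;> constructor <;> decide
      have h2 := Set.ncard_le_ncard hsub (Set.toFinite _)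
      rw [Set.ncard_pair (by decide : (2 : ZMod 5) ≠ 4)] at h2
      omega
    · -- n = 6
      have h := hlin 0 3 (by decide)
      have hsub : ({0, 3} : Set (ZMod 6)) ⊆
          {i : ZMod 6 | (0 : ZMod 6) ∈ cyclicLine 6 i ∧ (3 : ZMod 6) ∈ cyclicLine 6 i} := by
        rintro x (rfl | rfl) <;>
          simp only [Set.mem_setOf_eq, cyclicLine, Set.mem_insert_iff,
            Set.mem_singleton_iff] <;> constructor <;> decide
      have h2 := Set.ncard_le_ncard hsub (Set.toFinite _)
      rw [Set.ncard_pair (by decide : (0 : ZMod 6) ≠ 3)] at h2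
      omega
  · intro hn
    haveI : NeZero n := ⟨by omega⟩
    have hne : ∀ a b : ℤ, a ≠ b → (a - b).natAbs ≤ 6 → (a : ZMod n) ≠ (b : ZMod n) :=
      fun a b h1 h2 => zmod_small_ne hn h1 h2
    refine ⟨inferInstance, ?_, ?_, ?_, ?_⟩
    · -- injectivity
      intro i j h
      have hi : i ∈ cyclicLine n j := h ▸ (mem_cyclicLine_iff.mpr (Or.inl rfl))
      have hj : j ∈ cyclicLine n i := h.symm ▸ (mem_cyclicLine_iff.mpr (Or.inl rfl))
      obtain ⟨a, ha, hia⟩ := mem_cyclicLine_int hi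
      obtain ⟨b, hb, hjb⟩ := mem_cyclicLine_int hj
      -- i = j + a, j = i + b so (a + b : ZMod n) = 0
      have key : ((a + b : ℤ) : ZMod n) = ((0 : ℤ) : ZMod n) := by
        push_cast
        linear_combination -hia - hjb
      have hab : a + b = 0 := zmod_diff_eq hn key (by rcases ha with rfl|rfl|rfl <;> rcases hb with rfl|rfl|rfl <;> decide)
      have ha0 : a = 0 := by rcases ha with rfl|rfl|rfl <;> rcases hb with rfl|rfl|rfl <;> omega
      rw [ha0] at hia
      simpa using hia
    · -- linearity
      intro p q hpq
      rw [Set.ncard_le_one_iff (Set.toFinite _)]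
      rintro i j ⟨hpi, hqi⟩ ⟨hpj, hqj⟩
      obtain ⟨a, ha, hpa⟩ := mem_cyclicLine_int hpi
      obtain ⟨b, hb, hqb⟩ := mem_cyclicLine_int hqi
      obtain ⟨c, hc, hpc⟩ := mem_cyclicLine_int hpj
      obtain ⟨d, hd, hqd⟩ := mem_cyclicLine_int hqj
      have habne : a ≠ b := by
        rintro rfl
        exact hpq (by rw [hpa, hqb])
      have key : ((a - b : ℤ) : ZMod n) = ((c - d : ℤ) : ZMod n) := by
        push_cast
        linear_combination -hpa + hqb + hpc - hqd
      have h1 : a - b = c - d := zmod_diff_eq hn key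
        (by rcases ha with rfl|rfl|rfl <;> rcases hb with rfl|rfl|rfl <;>
            rcases hc with rfl|rfl|rfl <;> rcases hd with rfl|rfl|rfl <;> decide)
      have hac : a = c := by
        rcases ha with rfl|rfl|rfl <;> rcases hb with rfl|rfl|rfl <;>
          rcases hc with rfl|rfl|rfl <;> rcases hd with rfl|rfl|rfl <;> omega
      have : (a : ZMod n) = (c : ZMod n) := by rw [hac]
      have hij : i + (a : ZMod n) = j + (a : ZMod n) := by
        rw [← hpa, hpc, hac]
      exact add_right_cancel hij
    · -- each point on 3 lines
      intro p
      have hset : {i : ZMod n | p ∈ cyclicLine n i} = {p, p - 1, p - 3} := by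
        ext i
        simp only [Set.mem_setOf_eq, mem_cyclicLine_iff, Set.mem_insert_iff,
          Set.mem_singleton_iff]
        constructor
        · rintro (h | h | h)
          · exact Or.inl h.symm
          · exact Or.inr (Or.inl (by rw [h]; ring))
          · exact Or.inr (Or.inr (by rw [h]; ring))
        · rintro (rfl | rfl | rfl)
          · exact Or.inl rfl
          · exact Or.inr (Or.inl (by ring))
          · exact Or.inr (Or.inr (by ring))
      rw [hset]
      refine Set.ncard_eq_three.mpr ⟨p, p - 1, p - 3, ?_, ?_, ?_, rfl⟩
      · intro h
        exact hne 1 0 (by omega) (by decide) (by push_cast; linear_combination h)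
      · intro h
        exact hne 3 0 (by omega) (by decide) (by push_cast; linear_combination h)
      · intro h
        exact hne 2 0 (by omega) (by decide) (by push_cast; linear_combination h)
    · -- each line has 3 points
      intro i
      refine Set.ncard_eq_three.mpr ⟨i, i + 1, i + 3, ?_, ?_, ?_, rfl⟩
      · intro h
        exact hne 1 0 (by omega) (by decide) (by push_cast; linear_combination -h)
      · intro h
        exact hne 3 0 (by omega) (by decide) (by push_cast; linear_combination -h)
      · intro h
        exact hne 2 0 (by omega) (by decide) (by push_cast; linear_combination -h)
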